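/- Let √N·A be an N×N Hadamard matrix, and let N₁, N₂ be positive integers with N₁·N₂ < N; set n = N − N₂. Then any submatrix of A obtained by selecting n rows and N₁ columns has rank N₁. -/

import Mathlib

noncomputable def suppCard {n : ℕ} (f : Fin n → ℂ) : ℕ := (Function.support f).ncard

noncomputable def mu {n : ℕ} (A : Matrix (Fin n) (Fin n) ℂ) : ℕ :=
  sInf {m | ∃ f : Fin n → ℂ, f ≠ 0 ∧ m = suppCard f * suppCard (A.mulVec f)}

noncomputable def kron {N M : ℕ} [NeZero N] (A : Matrix (Fin N) (Fin N) ℂ)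
    (B : Matrix (Fin M) (Fin M) ℂ) : Matrix (Fin (N * M)) (Fin (N * M)) ℂ :=
  fun i j =>
    A ⟨i.val % N, Nat.mod_lt _ (Nat.pos_of_ne_zero (NeZero.ne N))⟩
      ⟨j.val % N, Nat.mod_lt _ (Nat.pos_of_ne_zero (NeZero.ne N))⟩ *
    B ⟨i.val / N, (Nat.div_lt_iff_lt_mul (Nat.pos_of_ne_zero (NeZero.ne N))).mpr
        (mul_comm N M ▸ i.isLt)⟩
      ⟨j.val / N, (Nat.div_lt_iff_lt_mul (Nat.pos_of_ne_zero (NeZero.ne N))).mpr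
        (mul_comm N M ▸ j.isLt)⟩

noncomputable def kronPow {N : ℕ} [NeZero N] (A : Matrix (Fin N) (Fin N) ℂ) :
    (p : ℕ) → Matrix (Fin (N ^ p)) (Fin (N ^ p)) ℂ
  | 0 => 1
  | p + 1 => Matrix.reindex (finCongr (by rw [pow_succ]; ring)) (finCongr (by rw [pow_succ]; ring))
      (kron A (kronPow A p))

lemma suppCard_eq {n : ℕ} (f : Fin n → ℂ) :
    suppCard f = (Finset.univ.filter (fun i => f i ≠ 0)).card := by
  rw [suppCard]
  rw [show Function.support f = ↑(Finset.univ.filter (fun i => f i ≠ 0)) by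
    ext i; simp [Function.mem_support]]
  exact Set.ncard_coe_finset _

lemma uncertainty {N : ℕ} (A : Matrix (Fin N) (Fin N) ℂ)
    (hA : A ∈ Matrix.unitaryGroup (Fin N) ℂ)
    (hHad : ∀ i j, ‖(Real.sqrt N : ℂ) * A i j‖ = 1)
    (f : Fin N → ℂ) (hf : f ≠ 0) :
    N ≤ suppCard f * suppCard (A.mulVec f) := by
  have hNpos : 0 < N := by
    rcases Nat.eq_zero_or_pos N with h0 | h0
    · exfalso; apply hf; funext i; exact absurd i.isLt (by omega)
    · exact h0
  have hsq : (0:ℝ) < Real.sqrt N := Real.sqrt_pos.mpr (by exact_mod_cast hNpos)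
  set g := A.mulVec f with hg
  -- entry bound
  have habs : ∀ i j, ‖A i j‖ = (Real.sqrt N)⁻¹ := by
    intro i j
    have := hHad i j
    rw [norm_mul] at this
    have h2 : ‖((Real.sqrt N : ℂ))‖ = Real.sqrt N := by
      simp [Complex.norm_real, abs_of_pos hsq]
    rw [show ((Real.sqrt N : ℝ) : ℂ) = (Real.sqrt N : ℂ) from rfl] at h2
    field_simp [h2] at this ⊢
    rw [h2] at this
    linarith [this]
  -- norm preservation
  have hnorm : ∑ i, Complex.normSq (g i) = ∑ i, Complex.normSq (f i) := by
    have hC : dotProduct (star g) g = dotProduct (star f) f := by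
      rw [hg, Matrix.star_mulVec, Matrix.dotProduct_mulVec, Matrix.vecMul_vecMul,
        show A.conjTranspose * A = 1 from hA.1, Matrix.vecMul_one]
    simp only [dotProduct, Pi.star_apply, Complex.star_def, ← Complex.normSq_eq_conj_mul_self] at hC
    exact_mod_cast hC
  set S₁ := Finset.univ.filter (fun i => f i ≠ 0) with hS₁
  set S₂ := Finset.univ.filter (fun i => g i ≠ 0) with hS₂
  set E := ∑ i, Complex.normSq (f i) with hE
  set L := ∑ i, ‖f i‖ with hL
  have hEpos : 0 < E := by
    have hex : ∃ i, f i ≠ 0 := by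
      by_contra hcon; push_neg at hcon; exact hf (funext hcon)
    obtain ⟨i, hi⟩ := hex
    exact lt_of_lt_of_le (Complex.normSq_pos.mpr hi)
      (Finset.single_le_sum (fun j _ => Complex.normSq_nonneg _) (Finset.mem_univ i))
  have hgbound : ∀ i, ‖g i‖ ≤ L / Real.sqrt N := by
    intro i
    have h1 : g i = ∑ j, A i j * f j := by
      simp [hg, Matrix.mulVec, dotProduct]
    rw [h1]
    calc ‖∑ j, A i j * f j‖ ≤ ∑ j, ‖A i j * f j‖ :=
          norm_sum_le _ _
      _ = ∑ j, (Real.sqrt N)⁻¹ * ‖f j‖ := by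
          simp only [norm_mul, habs]
      _ = L / Real.sqrt N := by rw [← Finset.mul_sum, ← hL]; ring
  have hCS : L ^ 2 ≤ (S₁.card : ℝ) * E := by
    have h1 : ∑ i ∈ S₁, ‖f i‖ = L := by
      rw [hS₁, hL]
      exact Finset.sum_filter_of_ne (fun x _ hx => by
        intro h0; rw [h0] at hx; simp at hx)
    have h2 := Finset.sum_mul_sq_le_sq_mul_sq S₁ (fun _ => (1:ℝ)) (fun i => ‖f i‖)
    simp only [one_mul, one_pow, Finset.sum_const, nsmul_eq_mul, mul_one] at h2
    rw [h1] at h2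
    refine h2.trans (mul_le_mul_of_nonneg_left ?_ (Nat.cast_nonneg _))
    calc ∑ i ∈ S₁, ‖f i‖ ^ 2 = ∑ i ∈ S₁, Complex.normSq (f i) := by
          simp [Complex.sq_norm]
      _ ≤ E := Finset.sum_le_sum_of_subset_of_nonneg (Finset.subset_univ _)
          (fun i _ _ => Complex.normSq_nonneg _)
  have hE2 : E ≤ (S₂.card : ℝ) * (L / Real.sqrt N) ^ 2 := by
    have h1 : ∑ i ∈ S₂, Complex.normSq (g i) = E := by
      rw [← hnorm, hS₂]
      exact Finset.sum_filter_of_ne (fun x _ hx => by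
        intro h0; rw [h0] at hx; simp at hx)
    rw [← h1]
    calc ∑ i ∈ S₂, Complex.normSq (g i) ≤ ∑ _i ∈ S₂, (L / Real.sqrt N) ^ 2 := by
          refine Finset.sum_le_sum (fun i _ => ?_)
          rw [← Complex.sq_norm]
          exact pow_le_pow_left₀ (norm_nonneg _) (hgbound i) 2
      _ = (S₂.card : ℝ) * (L / Real.sqrt N) ^ 2 := by
          rw [Finset.sum_const, nsmul_eq_mul]
  have hLsq : (L / Real.sqrt N) ^ 2 = L ^ 2 / N := by
    rw [div_pow, Real.sq_sqrt (Nat.cast_nonneg N)]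
  rw [hLsq] at hE2
  have hfinal : (N : ℝ) ≤ (S₁.card : ℝ) * (S₂.card : ℝ) := by
    have hN0 : (0:ℝ) < (N:ℝ) := by exact_mod_cast hNpos
    have hE3 : (N : ℝ) * E ≤ (S₂.card : ℝ) * L ^ 2 := by
      rw [← mul_div_assoc] at hE2
      have := (le_div_iff₀ hN0).mp hE2
      linarith
    nlinarith [hE3, hCS, hEpos, hN0, mul_le_mul_of_nonneg_left hCS (Nat.cast_nonneg S₂.card)]
  rw [suppCard_eq, suppCard_eq]
  have := hfinal
  push_cast at this ⊢
  exact_mod_cast this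

/-- Any `(N - N₂) × N₁` submatrix of a scaled Hadamard matrix with
`N₁ N₂ < N` has full rank `N₁`. -/
theorem stmt_15 {N : ℕ} (A : Matrix (Fin N) (Fin N) ℂ)
    (hA : A ∈ Matrix.unitaryGroup (Fin N) ℂ)
    (hHad : ∀ i j, ‖(Real.sqrt N : ℂ) * A i j‖ = 1)
    (N₁ N₂ : ℕ) (hN₁ : 0 < N₁) (hN₂ : 0 < N₂) (h : N₁ * N₂ < N)
    (r : Fin (N - N₂) → Fin N) (hr : Function.Injective r)
    (c : Fin N₁ → Fin N) (hc : Function.Injective c) :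
    (A.submatrix r c).rank = N₁ := by
  have hN2leN : N₂ ≤ N := le_of_lt (lt_of_le_of_lt (Nat.le_mul_of_pos_left _ hN₁) h)
  have hinj : Function.Injective (A.submatrix r c).mulVecLin := by
    rw [← LinearMap.ker_eq_bot, LinearMap.ker_eq_bot']
    intro g hg0
    by_contra hgne
    set f : Fin N → ℂ := fun j => ∑ k, if c k = j then g k else 0 with hfdef
    have hfc : ∀ k, f (c k) = g k := by
      intro k
      rw [hfdef]
      simp only
      rw [Finset.sum_eq_single k (fun b _ hb => by
        rw [if_neg (fun hcb => hb (hc hcb))]) (fun hk => absurd (Finset.mem_univ k) hk)]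
      simp
    have hf0 : ∀ j, (∀ k, c k ≠ j) → f j = 0 := by
      intro j hj
      rw [hfdef]
      exact Finset.sum_eq_zero (fun k _ => if_neg (hj k))
    have hfne : f ≠ 0 := by
      have : ∃ k, g k ≠ 0 := by
        by_contra hcon; push_neg at hcon; exact hgne (funext hcon)
      obtain ⟨k, hk⟩ := this
      intro h0
      exact hk (by rw [← hfc k, h0]; rfl)
    have hmv : ∀ i, A.mulVec f i = ∑ k, A i (c k) * g k := by
      intro i
      simp only [Matrix.mulVec, dotProduct, hfdef, Finset.mul_sum, mul_ite, mul_zero]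
      rw [Finset.sum_comm]
      refine Finset.sum_congr rfl (fun k _ => ?_)
      simp [Finset.sum_ite_eq]
    have hs1 : suppCard f ≤ N₁ := by
      rw [suppCard]
      have hsub : Function.support f ⊆ ↑(Finset.univ.image c) := by
        intro j hj
        by_contra hjn
        refine hj (hf0 j (fun k hk => hjn ?_))
        simp only [Finset.coe_image, Set.mem_image, Finset.mem_coe]
        exact ⟨k, by simp, hk⟩
      calc (Function.support f).ncard ≤ (↑(Finset.univ.image c) : Set (Fin N)).ncard :=
            Set.ncard_le_ncard hsub (Set.toFinite _)
        _ = N₁ := by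
            rw [Set.ncard_coe_finset, Finset.card_image_of_injective _ hc]
            simp
    have hAf : ∀ a, A.mulVec f (r a) = 0 := by
      intro a
      have h0 := congrFun hg0 a
      simp only [Matrix.mulVecLin_apply, Matrix.mulVec, dotProduct,
        Matrix.submatrix_apply, Pi.zero_apply] at h0
      rw [hmv]
      exact h0
    have hs2 : suppCard (A.mulVec f) ≤ N₂ := by
      rw [suppCard]
      have hsub : Function.support (A.mulVec f) ⊆ ↑(Finset.univ \ Finset.univ.image r) := by
        intro j hj
        simp only [Finset.coe_sdiff, Set.mem_diff, Finset.coe_univ, Set.mem_univ, true_and,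
          Finset.coe_image, Set.mem_image, Finset.mem_coe, not_exists]
        intro a ha
        exact hj (ha ▸ hAf a)
      calc (Function.support (A.mulVec f)).ncard
          ≤ (↑(Finset.univ \ Finset.univ.image r) : Set (Fin N)).ncard :=
            Set.ncard_le_ncard hsub (Set.toFinite _)
        _ ≤ N₂ := by
            rw [Set.ncard_coe_finset, Finset.card_sdiff_of_subset (Finset.subset_univ _),
              Finset.card_image_of_injective _ hr]
            simp
            omega
    have hup := uncertainty A hA hHad f hfne
    have : N ≤ N₁ * N₂ := le_trans hup (Nat.mul_le_mul hs1 hs2)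
    omega
  rw [Matrix.rank, LinearMap.finrank_range_of_inj hinj,
    Module.finrank_fintype_fun_eq_card, Fintype.card_fin]
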